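/- arXiv:2501.03422 — 2 statements merged into one kernel-verified Lean document; each statement's English description precedes it below -/
import Mathlib

section
/- Let O be a discrete valuation ring with uniformizer π whose residue field k = O/(π) is finite with q elements, let M be a free O-module of rank n, and let r be an integer with 0 < r ≤ n. Then the set of submodules N ≤ M such that the O-module M/N is isomorphic to k^r is finite, and its cardinality c satisfies c · ∏_{i=1}^{r} (q^i − 1) = ∏_{i=1}^{r} (q^{n−r+i} − 1); that is, c equals the Gaussian binomial coefficient counting the points of the Grassmannian Gr_{n−r}(k^n). -/
open Finset

private theorem count_finrank_eq {K V : Type*} [Field K] [Fintype K] [AddCommGroup V]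
    [Module K V] [Finite V] (n m : ℕ) (hV : Module.finrank K V = n) (hm : m ≤ n) :
    Nat.card {W : Submodule K V // Module.finrank K W = m} *
      ∏ i ∈ range m, (Fintype.card K ^ m - Fintype.card K ^ i) =
    ∏ i ∈ range m, (Fintype.card K ^ n - Fintype.card K ^ i) := by
  classical
  have hfinV : Module.Finite K V := Module.Finite.of_finite
  have hfinsub : Finite (Submodule K V) :=
    Finite.of_injective (fun W => (W : Set V)) SetLike.coe_injective
  have hLI := card_linearIndependent (K := K) (V := V) (k := m) (by rw [hV]; exact hm)
  set f : {s : Fin m → V // LinearIndependent K s} →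
      {W : Submodule K V // Module.finrank K W = m} :=
    fun s => ⟨Submodule.span K (Set.range s.1),
      by rw [finrank_span_eq_card s.2, Fintype.card_fin]⟩ with hf
  have key : ∀ W : {W : Submodule K V // Module.finrank K W = m},
      Nat.card {s // f s = W} = ∏ i ∈ range m, (Fintype.card K ^ m - Fintype.card K ^ i) := by
    intro W
    have e : {s // f s = W} ≃ {t : Fin m → W.1 // LinearIndependent K t} :=
      { toFun := fun s => ⟨fun i => ⟨s.1.1 i, by
          rw [← show (f s.1).1 = W.1 from congrArg Subtype.val s.2]
          exact Submodule.subset_span ⟨i, rfl⟩⟩,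
          LinearIndependent.of_comp W.1.subtype s.1.2⟩
        invFun := fun t => ⟨⟨fun i => (t.1 i : V),
            t.2.map' W.1.subtype (Submodule.ker_subtype _)⟩, by
          apply Subtype.ext
          show Submodule.span K (Set.range fun i => ((t.1 i : V))) = W.1
          have hsp : Submodule.span K (Set.range t.1) = ⊤ :=
            t.2.span_eq_top_of_card_eq_finrank' (by rw [Fintype.card_fin, W.2])
          have : (Set.range fun i => ((t.1 i : V))) = W.1.subtype '' Set.range t.1 := by
            rw [← Set.range_comp]; rfl
          rw [this, ← Submodule.map_span, hsp, Submodule.map_top, Submodule.range_subtype]⟩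
        left_inv := fun s => Subtype.ext (Subtype.ext rfl)
        right_inv := fun t => Subtype.ext rfl }
    rw [Nat.card_congr e]
    have : Module.finrank K W.1 = m := W.2
    rw [card_linearIndependent (K := K) (V := W.1) (k := m) (le_of_eq this.symm), this]
    rw [← Fin.prod_univ_eq_prod_range]
  have hsigma : Nat.card {s : Fin m → V // LinearIndependent K s} =
      Nat.card {W : Submodule K V // Module.finrank K W = m} *
        ∏ i ∈ range m, (Fintype.card K ^ m - Fintype.card K ^ i) := by
    have := Fintype.ofFinite {W : Submodule K V // Module.finrank K W = m}
    have := Fintype.ofFinite V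
    have : Fintype {s : Fin m → V // LinearIndependent K s} := Fintype.ofFinite _
    rw [← Nat.card_congr (Equiv.sigmaFiberEquiv f)]
    have : ∀ W : {W : Submodule K V // Module.finrank K W = m}, Fintype {s // f s = W} :=
      fun W => Fintype.ofFinite _
    rw [Nat.card_eq_fintype_card, Fintype.card_sigma]
    simp only [← Nat.card_eq_fintype_card, key, Finset.sum_const, Finset.card_univ, smul_eq_mul]
  rw [← hsigma, hLI, hV, ← Fin.prod_univ_eq_prod_range]


private theorem prod_factor (q : ℕ) (A m : ℕ) (hmA : m ≤ A) :
    ∏ i ∈ range m, (q ^ A - q ^ i) =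
      (∏ i ∈ range m, q ^ i) * ∏ i ∈ range m, (q ^ (A - m + i + 1) - 1) := by
  have step2 : ∏ i ∈ range m, (q ^ (A - m + i + 1) - 1) = ∏ i ∈ range m, (q ^ (A - i) - 1) := by
    rw [← Finset.prod_range_reflect]
    apply Finset.prod_congr rfl
    intro i hi
    rw [Finset.mem_range] at hi
    congr 2
    omega
  rw [step2, ← Finset.prod_mul_distrib]
  apply Finset.prod_congr rfl
  intro i hi
  rw [Finset.mem_range] at hi
  rw [Nat.mul_sub, mul_one, ← pow_add]
  congr 2
  omega

private theorem gauss_prod_identity (q n r : ℕ) (hrn : r ≤ n) :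
    (∏ i ∈ range (n - r), (q ^ n - q ^ i)) * ∏ i ∈ range r, (q ^ (i + 1) - 1) =
    (∏ i ∈ range (n - r), (q ^ (n - r) - q ^ i)) * ∏ i ∈ range r, (q ^ (n - r + i + 1) - 1) := by
  rw [prod_factor q n (n - r) (by omega), prod_factor q (n - r) (n - r) le_rfl]
  have h1 : ∏ i ∈ range (n - r), (q ^ (n - (n - r) + i + 1) - 1) =
      ∏ i ∈ range (n - r), (q ^ (r + i + 1) - 1) := by
    apply Finset.prod_congr rfl
    intro i hi
    congr 2
    omega
  have h2 : ∏ i ∈ range (n - r), (q ^ (n - r - (n - r) + i + 1) - 1) =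
      ∏ i ∈ range (n - r), (q ^ (i + 1) - 1) := by
    apply Finset.prod_congr rfl
    intro i hi
    congr 2
    omega
  rw [h1, h2]
  have e1 : (∏ i ∈ range (n - r), (q ^ (r + i + 1) - 1)) * ∏ i ∈ range r, (q ^ (i + 1) - 1) =
      ∏ i ∈ range n, (q ^ (i + 1) - 1) := by
    rw [mul_comm, ← Finset.prod_range_add (fun i => q ^ (i + 1) - 1) r (n - r),
      show r + (n - r) = n by omega]
  have e2 : (∏ i ∈ range (n - r), (q ^ (i + 1) - 1)) * ∏ i ∈ range r, (q ^ (n - r + i + 1) - 1) =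
      ∏ i ∈ range n, (q ^ (i + 1) - 1) := by
    rw [← Finset.prod_range_add (fun i => q ^ (i + 1) - 1) (n - r) r,
      show n - r + r = n by omega]
  rw [mul_assoc, mul_assoc, e1, e2]


private def kifySubmodule {R S M : Type*} [CommRing R] [CommRing S] [Algebra R S]
    (hs : Function.Surjective (algebraMap R S)) [AddCommGroup M] [Module R M] [Module S M]
    [IsScalarTower R S M] (W : Submodule R M) : Submodule S M where
  carrier := W
  add_mem' := fun h1 h2 => W.add_mem h1 h2
  zero_mem' := W.zero_mem
  smul_mem' := fun c x hx => by
    obtain ⟨a, rfl⟩ := hs c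
    rw [algebraMap_smul]
    exact W.smul_mem a hx

private lemma restrictScalars_kify {R S M : Type*} [CommRing R] [CommRing S] [Algebra R S]
    (hs : Function.Surjective (algebraMap R S)) [AddCommGroup M] [Module R M] [Module S M]
    [IsScalarTower R S M] (W : Submodule R M) :
    (kifySubmodule hs W).restrictScalars R = W := by
  ext x; rfl

private lemma kify_restrictScalars {R S M : Type*} [CommRing R] [CommRing S] [Algebra R S]
    (hs : Function.Surjective (algebraMap R S)) [AddCommGroup M] [Module R M] [Module S M]
    [IsScalarTower R S M] (W : Submodule S M) :
    kifySubmodule hs (W.restrictScalars R) = W := by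
  ext x; rfl

private noncomputable def quotMapEquiv {R M V : Type*} [CommRing R] [AddCommGroup M] [Module R M]
    [AddCommGroup V] [Module R V] (f : M →ₗ[R] V) (hf : Function.Surjective f)
    (N : Submodule R M) (hker : LinearMap.ker f ≤ N) :
    (M ⧸ N) ≃ₗ[R] (V ⧸ Submodule.map f N) :=
  (Submodule.quotEquivOfEq N (LinearMap.ker ((Submodule.map f N).mkQ.comp f))
    (by rw [LinearMap.ker_comp, Submodule.ker_mkQ, Submodule.comap_map_eq]
        exact (sup_eq_left.mpr hker).symm)).trans
    (((Submodule.map f N).mkQ.comp f).quotKerEquivOfSurjective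
      ((Submodule.mkQ_surjective _).comp hf))


set_option maxHeartbeats 1000000 in
open Finset in
/-- Let `O` be a DVR with uniformizer `π` whose residue field `k = O⧸(π)`
is finite with `q` elements, `M` a free `O`-module of rank `n`, and `0 < r ≤ n`. Then the
set of submodules `N ≤ M` with `M⧸N ≅ k^r` is finite, and its cardinality `c` satisfies
`c • ∏_{i=1}^{r} (q^i - 1) = ∏_{i=1}^{r} (q^{n-r+i} - 1)`, i.e. `c` is the Gaussian binomial
coefficient counting the points of the Grassmannian `Gr_{n-r}(k^n)`. -/
theorem hecke_modifications_count_grassmannian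
    {O : Type*} [CommRing O] [IsDomain O] [IsDiscreteValuationRing O]
    (π : O) (hπ : Irreducible π)
    [Finite (O ⧸ Ideal.span {π})] (q : ℕ) (hq : Nat.card (O ⧸ Ideal.span {π}) = q)
    {M : Type*} [AddCommGroup M] [Module O M]
    (n : ℕ) (b : Module.Basis (Fin n) O M)
    (r : ℕ) (hr : 0 < r) (hrn : r ≤ n) :
    {N : Submodule O M | Nonempty ((M ⧸ N) ≃ₗ[O] (Fin r → O ⧸ Ideal.span {π}))}.Finite ∧
    Nat.card {N : Submodule O M | Nonempty ((M ⧸ N) ≃ₗ[O] (Fin r → O ⧸ Ideal.span {π}))} *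
        ∏ i ∈ Finset.range r, (q ^ (i + 1) - 1) =
      ∏ i ∈ Finset.range r, (q ^ (n - r + i + 1) - 1) := by
  classical
  set I : Ideal O := Ideal.span {π} with hI
  have hImax : I.IsMaximal := PrincipalIdealRing.isMaximal_of_irreducible hπ
  letI : Field (O ⧸ I) := Ideal.Quotient.field I
  letI := Fintype.ofFinite (O ⧸ I)
  have hsurj : Function.Surjective (algebraMap O (O ⧸ I)) := by
    rw [Ideal.Quotient.algebraMap_eq]
    exact Ideal.Quotient.mk_surjective
  set φ : M →ₗ[O] (Fin n → O ⧸ I) :=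
    (LinearMap.pi fun i => (Algebra.linearMap O (O ⧸ I)).comp (LinearMap.proj i)).comp
      b.equivFun.toLinearMap with hφdef
  have hφ : ∀ (m : M) (i : Fin n), φ m i = algebraMap O (O ⧸ I) (b.equivFun m i) :=
    fun m i => rfl
  have hφsurj : Function.Surjective φ := by
    intro f
    choose g hg using fun i => hsurj (f i)
    refine ⟨b.equivFun.symm g, ?_⟩
    funext i
    rw [hφ, LinearEquiv.apply_symm_apply, hg i]
  have hπK : ∀ z : O ⧸ I, π • z = 0 := by
    intro z
    obtain ⟨a, rfl⟩ := Ideal.Quotient.mk_surjective (I := I) z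
    have h1 : π • (Ideal.Quotient.mk I) a = (Ideal.Quotient.mk I) (π * a) := rfl
    rw [h1, Ideal.Quotient.eq_zero_iff_mem]
    exact I.mul_mem_right a (Ideal.mem_span_singleton_self π)
  have hπsmul : ∀ (N : Submodule O M),
      Nonempty ((M ⧸ N) ≃ₗ[O] (Fin r → O ⧸ I)) → ∀ m : M, π • m ∈ N := by
    rintro N ⟨e⟩ m
    have h0 : π • (Submodule.Quotient.mk (p := N) m) = 0 := by
      apply e.injective
      rw [map_smul, map_zero]
      funext i
      show π • (e (Submodule.Quotient.mk m)) i = (0 : Fin r → O ⧸ I) i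
      rw [hπK]
      rfl
    rwa [← Submodule.Quotient.mk_smul, Submodule.Quotient.mk_eq_zero] at h0
  have hker : ∀ N : Submodule O M, (∀ m : M, π • m ∈ N) → LinearMap.ker φ ≤ N := by
    intro N hN m hm
    rw [LinearMap.mem_ker] at hm
    have hm' : ∀ i, b.equivFun m i ∈ I := by
      intro i
      have h2 := congrFun hm i
      rw [Pi.zero_apply, hφ, Ideal.Quotient.algebraMap_eq, Ideal.Quotient.eq_zero_iff_mem] at h2
      exact h2
    choose c hc using fun i => Ideal.mem_span_singleton'.mp (hm' i)
    have hm2 : m = π • ∑ i, c i • b i := by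
      conv_lhs => rw [← b.sum_equivFun m]
      rw [Finset.smul_sum]
      apply Finset.sum_congr rfl
      intro i _
      rw [← hc i, smul_smul, mul_comm]
    rw [hm2]
    exact hN _
  set V := Fin n → O ⧸ I with hV
  set S : Set (Submodule O M) := {N | Nonempty ((M ⧸ N) ≃ₗ[O] (Fin r → O ⧸ I))} with hS
  set T : Set (Submodule (O ⧸ I) V) := {W | Module.finrank (O ⧸ I) W = n - r} with hT
  have hVfr : Module.finrank (O ⧸ I) V = n := by
    rw [Module.finrank_fintype_fun_eq_card, Fintype.card_fin]
  have quotEquiv : ∀ (N : Submodule O M), LinearMap.ker φ ≤ N →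
      Nonempty ((M ⧸ N) ≃ₗ[O] (V ⧸ kifySubmodule hsurj (Submodule.map φ N))) := by
    intro N hkN
    have E1 : (M ⧸ N) ≃ₗ[O] (V ⧸ Submodule.map φ N) := quotMapEquiv φ hφsurj N hkN
    have E2 : (V ⧸ Submodule.map φ N) ≃ₗ[O]
        (V ⧸ (kifySubmodule hsurj (Submodule.map φ N)).restrictScalars O) :=
      Submodule.quotEquivOfEq _ _ (restrictScalars_kify hsurj (Submodule.map φ N)).symm
    have E3 : (V ⧸ (kifySubmodule hsurj (Submodule.map φ N)).restrictScalars O) ≃ₗ[O]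
        (V ⧸ kifySubmodule hsurj (Submodule.map φ N)) :=
      Submodule.Quotient.restrictScalarsEquiv O (kifySubmodule hsurj (Submodule.map φ N))
    exact ⟨E1.trans (E2.trans E3)⟩
  have hFmem : ∀ N ∈ S, kifySubmodule hsurj (Submodule.map φ N) ∈ T := by
    intro N hN
    obtain ⟨e⟩ := hN
    have hkN := hker N (hπsmul N ⟨e⟩)
    obtain ⟨E⟩ := quotEquiv N hkN
    set W := kifySubmodule hsurj (Submodule.map φ N) with hW
    have e' : (V ⧸ W) ≃ₗ[O] (Fin r → O ⧸ I) := E.symm.trans e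
    have eK : (V ⧸ W) ≃ₗ[O ⧸ I] (Fin r → O ⧸ I) :=
      LinearEquiv.extendScalarsOfSurjective hsurj e'
    have h3 : Module.finrank (O ⧸ I) (V ⧸ W) = r := by
      rw [eK.finrank_eq, Module.finrank_fintype_fun_eq_card, Fintype.card_fin]
    have h4 := Submodule.finrank_quotient_add_finrank W
    show Module.finrank (O ⧸ I) W = n - r
    rw [hVfr, h3] at h4
    omega
  have hGmem : ∀ W ∈ T, Submodule.comap φ (W.restrictScalars O) ∈ S := by
    intro W hW
    set N := Submodule.comap φ (W.restrictScalars O) with hN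
    have hkN : LinearMap.ker φ ≤ N := Submodule.comap_mono bot_le
    have hmap : Submodule.map φ N = W.restrictScalars O :=
      Submodule.map_comap_eq_of_surjective hφsurj _
    obtain ⟨E⟩ := quotEquiv N hkN
    have hW2 : kifySubmodule hsurj (Submodule.map φ N) = W := by
      rw [hmap, kify_restrictScalars]
    have hWfr : Module.finrank (O ⧸ I) W = n - r := hW
    have h4 := Submodule.finrank_quotient_add_finrank W
    rw [hVfr, hWfr] at h4
    have h3 : Module.finrank (O ⧸ I) (V ⧸ kifySubmodule hsurj (Submodule.map φ N)) = r := by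
      rw [hW2]
      omega
    obtain ⟨eK⟩ := FiniteDimensional.nonempty_linearEquiv_of_finrank_eq
      (R := O ⧸ I) (M := V ⧸ kifySubmodule hsurj (Submodule.map φ N)) (M' := Fin r → O ⧸ I)
      (by rw [h3, Module.finrank_fintype_fun_eq_card, Fintype.card_fin])
    exact ⟨E.trans (eK.restrictScalars O)⟩
  have eST : ↥S ≃ ↥T :=
    { toFun := fun N => ⟨kifySubmodule hsurj (Submodule.map φ N.1), hFmem N.1 N.2⟩
      invFun := fun W => ⟨Submodule.comap φ (W.1.restrictScalars O), hGmem W.1 W.2⟩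
      left_inv := fun ⟨N, hN⟩ => by
        apply Subtype.ext
        show Submodule.comap φ ((kifySubmodule hsurj (Submodule.map φ N)).restrictScalars O) = N
        rw [restrictScalars_kify, Submodule.comap_map_eq, sup_eq_left.mpr (hker N (hπsmul N hN))]
      right_inv := fun ⟨W, hW⟩ => by
        apply Subtype.ext
        show kifySubmodule hsurj (Submodule.map φ (Submodule.comap φ (W.restrictScalars O))) = W
        rw [Submodule.map_comap_eq_of_surjective hφsurj, kify_restrictScalars] }
  have hTfin : Finite (Submodule (O ⧸ I) V) :=
    Finite.of_injective (fun W => (W : Set V)) SetLike.coe_injective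
  haveI : Finite ↥T := Subtype.finite
  haveI : Finite ↥S := Finite.of_equiv _ eST.symm
  refine ⟨S.toFinite, ?_⟩
  have hcard : Nat.card ↥S =
      Nat.card {W : Submodule (O ⧸ I) V // Module.finrank (O ⧸ I) W = n - r} :=
    Nat.card_congr (eST.trans (Equiv.subtypeEquivRight fun W => Iff.rfl))
  have hqc : Fintype.card (O ⧸ I) = q := by rw [← Nat.card_eq_fintype_card, hq]
  have hcount := count_finrank_eq (K := O ⧸ I) (V := V) n (n - r) hVfr (by omega)
  rw [hqc] at hcount
  have hgauss := gauss_prod_identity q n r hrn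
  have hq2 : 1 < q := by rw [← hqc]; exact Fintype.one_lt_card
  have hApos : 0 < ∏ i ∈ range (n - r), (q ^ (n - r) - q ^ i) := by
    apply Finset.prod_pos
    intro i hi
    rw [Finset.mem_range] at hi
    have := Nat.pow_lt_pow_right hq2 hi
    omega
  rw [hcard]
  apply Nat.eq_of_mul_eq_mul_right hApos
  calc Nat.card {W : Submodule (O ⧸ I) V // Module.finrank (O ⧸ I) W = n - r} *
        (∏ i ∈ range r, (q ^ (i + 1) - 1)) * ∏ i ∈ range (n - r), (q ^ (n - r) - q ^ i)
      = Nat.card {W : Submodule (O ⧸ I) V // Module.finrank (O ⧸ I) W = n - r} *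
        (∏ i ∈ range (n - r), (q ^ (n - r) - q ^ i)) * ∏ i ∈ range r, (q ^ (i + 1) - 1) := by
        ring
    _ = (∏ i ∈ range (n - r), (q ^ n - q ^ i)) * ∏ i ∈ range r, (q ^ (i + 1) - 1) := by
        rw [hcount]
    _ = (∏ i ∈ range (n - r), (q ^ (n - r) - q ^ i)) *
          ∏ i ∈ range r, (q ^ (n - r + i + 1) - 1) := hgauss
    _ = (∏ i ∈ range r, (q ^ (n - r + i + 1) - 1)) *
          ∏ i ∈ range (n - r), (q ^ (n - r) - q ^ i) := by ring
end

section
/- Let O be a discrete valuation ring with uniformizer π, residue field k = O/(π), and fraction field K. Let N be a free O-module of rank n, let ι : N → K ⊗_O N be the canonical map (which is injective), and let r be an integer with 0 < r ≤ n. Then the set of O-submodules M of K ⊗_O N that contain ι(N) and satisfy that the O-module M/ι(N) is isomorphic to k^r is in bijection with the set of r-dimensional k-linear subspaces of N/πN; the bijection sends M to the image of π·M in ι(N)/π·ι(N) ≅ N/πN. -/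
open Pointwise


open TensorProduct in
/-- Let `O` be a DVR with uniformizer `π`, residue field `k = O⧸(π)` and
fraction field `K`. Let `N` be a free `O`-module of rank `n`, let `ι : N → K ⊗[O] N` be the
canonical map (which is injective), and let `0 < r ≤ n`. Then the set of `O`-submodules `M`
of `K ⊗[O] N` containing `ι(N)` with `M⧸ι(N) ≅ k^r` is in bijection with the set of
`r`-dimensional subspaces of `N⧸πN` (those isomorphic to `k^r`); the bijection sends `M` to
the image of `π•M` in `ι(N)⧸π•ι(N) ≅ N⧸πN`. -/
theorem hecke_fiber_over_source_bijection_grassmannian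
    {O : Type*} [CommRing O] [IsDomain O] [IsDiscreteValuationRing O]
    (π : O) (hπ : Irreducible π)
    (K : Type*) [Field K] [Algebra O K] [IsFractionRing O K]
    {N : Type*} [AddCommGroup N] [Module O N]
    (n : ℕ) (b : Module.Basis (Fin n) O N)
    (r : ℕ) (hr : 0 < r) (hrn : r ≤ n)
    (ι : N →ₗ[O] K ⊗[O] N) (hι : ι = TensorProduct.mk O K N 1) :
    Function.Injective ι ∧
    Set.BijOn
      (fun M : Submodule O (K ⊗[O] N) =>
        Submodule.map (Submodule.mkQ (Ideal.span {π} • (⊤ : Submodule O N)))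
          (Submodule.comap ι (Ideal.span {π} • M)))
      {M : Submodule O (K ⊗[O] N) |
        LinearMap.range ι ≤ M ∧
        Nonempty
          ((@HasQuotient.Quotient (↥M) (Submodule O ↥M) (@Submodule.hasQuotient O ↥M _ M.addCommGroup _)
              (Submodule.comap M.subtype (LinearMap.range ι)))
            ≃ₗ[O] (Fin r → O ⧸ Ideal.span {π}))}
      {W : Submodule O (N ⧸ (Ideal.span {π} • (⊤ : Submodule O N))) |
        Nonempty (W ≃ₗ[O] (Fin r → O ⧸ Ideal.span {π}))} := by
  -- injectivity of ι
  haveI : Module.Free O N := Module.Free.of_basis b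
  letI : ∀ M : Submodule O (K ⊗[O] N), AddCommGroup M := fun M => M.addCommGroup
  have hinj : Function.Injective ι := by
    rw [hι]
    have h2 : Function.Injective ((Algebra.linearMap O K).rTensor N) :=
      Module.Flat.rTensor_preserves_injective_linearMap _ (IsFractionRing.injective O K)
    have h3 : ∀ x : N, (TensorProduct.mk O K N 1) x
        = (Algebra.linearMap O K).rTensor N ((TensorProduct.lid O N).symm x) := by
      intro x; simp
    intro x y hxy
    have := h2 (by rw [← h3, ← h3, hxy] : (Algebra.linearMap O K).rTensor N
      ((TensorProduct.lid O N).symm x) = (Algebra.linearMap O K).rTensor N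
      ((TensorProduct.lid O N).symm y))
    exact (TensorProduct.lid O N).symm.injective this
  refine ⟨hinj, ?_⟩
  -- the multiplication-by-π equivalence of K ⊗ N
  have hπK : algebraMap O K π ≠ 0 := fun h =>
    hπ.ne_zero (IsFractionRing.to_map_eq_zero_iff.mp h)
  obtain ⟨φ, hφ⟩ : ∃ e : (K ⊗[O] N) ≃ₗ[O] (K ⊗[O] N), ∀ v, e v = π • v :=
    ⟨(LinearEquiv.smulOfNeZero K _ (algebraMap O K π) hπK).restrictScalars O,
     fun v => algebraMap_smul K π v⟩
  have hφ' : ∀ v, φ.toLinearMap v = π • v := hφ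
  have hφs : ∀ v, φ.symm.toLinearMap v = φ.symm v := fun v => rfl
  -- membership in π • ⊤
  have mem_piN : ∀ x : N, (x ∈ Ideal.span {π} • (⊤ : Submodule O N)) ↔ ∃ y, π • y = x := by
    intro x
    rw [Submodule.ideal_span_singleton_smul]
    constructor
    · intro hx
      obtain ⟨y, -, hy⟩ := Set.mem_smul_set.mp hx
      exact ⟨y, hy⟩
    · rintro ⟨y, rfl⟩
      exact Submodule.smul_mem_pointwise_smul y π ⊤ trivial
  have smul_eq_map : ∀ (M : Submodule O (K ⊗[O] N)),
      Ideal.span {π} • M = M.map φ.toLinearMap := by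
    intro M
    rw [Submodule.ideal_span_singleton_smul]
    ext x
    constructor
    · intro hx
      obtain ⟨y, hy, rfl⟩ := Set.mem_smul_set.mp hx
      exact ⟨y, hy, hφ' y⟩
    · rintro ⟨y, hy, rfl⟩
      rw [hφ']
      exact Submodule.smul_mem_pointwise_smul y π M hy
  -- key: φ.symm (ι t) ∈ range ι ↔ t ∈ πN
  have hkey : ∀ t : N, (φ.symm (ι t) ∈ LinearMap.range ι
      ↔ t ∈ Ideal.span {π} • (⊤ : Submodule O N)) := by
    intro t
    rw [mem_piN]
    constructor
    · rintro ⟨y, hy⟩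
      refine ⟨y, hinj ?_⟩
      have h1 : φ (ι y) = ι t := by rw [hy, φ.apply_symm_apply]
      rw [map_smul, ← hφ, h1]
    · rintro ⟨y, rfl⟩
      exact ⟨y, by rw [map_smul, ← hφ, φ.symm_apply_apply]⟩
  -- π kills the residue field
  have hkill : ∀ z : O ⧸ Ideal.span {π}, π • z = 0 := by
    intro z
    obtain ⟨y, rfl⟩ := Submodule.Quotient.mk_surjective _ z
    rw [← Submodule.Quotient.mk_smul]
    exact (Submodule.Quotient.mk_eq_zero _).mpr
      (Ideal.mem_span_singleton.mpr (Dvd.intro y rfl))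
  -- π • M ≤ range ι for M in the source
  have hsmul_le : ∀ M : Submodule O (K ⊗[O] N), LinearMap.range ι ≤ M →
      Nonempty ((↥M ⧸ Submodule.comap M.subtype (LinearMap.range ι))
        ≃ₗ[O] (Fin r → O ⧸ Ideal.span {π})) →
      Ideal.span {π} • M ≤ LinearMap.range ι := by
    rintro M hle ⟨e⟩
    rw [smul_eq_map]
    rintro x ⟨m, hm, rfl⟩
    rw [hφ']
    have h0 : π • (Submodule.Quotient.mk (⟨m, hm⟩ : M) :
        ↥M ⧸ Submodule.comap M.subtype (LinearMap.range ι)) = 0 := by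
      apply e.injective
      rw [map_smul, map_zero]
      funext i
      rw [Pi.smul_apply, hkill, Pi.zero_apply]
    rw [← Submodule.Quotient.mk_smul] at h0
    have h1 : (π • (⟨m, hm⟩ : M)) ∈ Submodule.comap M.subtype (LinearMap.range ι) :=
      (Submodule.Quotient.mk_eq_zero _).mp h0
    simpa using h1
  -- the engine
  have hengine : ∀ T : Submodule O N, Ideal.span {π} • (⊤ : Submodule O N) ≤ T →
      LinearMap.range ι ≤ Submodule.map (φ.symm.toLinearMap ∘ₗ ι) T ∧
      Nonempty (↥(Submodule.map (Submodule.mkQ (Ideal.span {π} • (⊤ : Submodule O N))) T) ≃ₗ[O]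
        (↥(Submodule.map (φ.symm.toLinearMap ∘ₗ ι) T) ⧸
          Submodule.comap (Submodule.map (φ.symm.toLinearMap ∘ₗ ι) T).subtype
            (LinearMap.range ι))) := by
    intro T hT
    constructor
    · rintro x ⟨y, rfl⟩
      have hy : π • y ∈ T := hT ((mem_piN _).mpr ⟨y, rfl⟩)
      refine ⟨π • y, hy, ?_⟩
      show φ.symm (ι (π • y)) = ι y
      rw [map_smul, ← hφ, φ.symm_apply_apply]
    · set MT := Submodule.map (φ.symm.toLinearMap ∘ₗ ι) T with hMT
      let f1 : ↥T →ₗ[O] ↥(T.map (Submodule.mkQ (Ideal.span {π} • (⊤ : Submodule O N)))) :=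
        LinearMap.codRestrict _ ((Submodule.mkQ _) ∘ₗ T.subtype)
          (fun t => Submodule.mem_map_of_mem t.2)
      have hf1s : Function.Surjective f1 := by
        rintro ⟨x, hx⟩
        obtain ⟨t, ht, rfl⟩ := hx
        exact ⟨⟨t, ht⟩, rfl⟩
      let f0 : ↥T →ₗ[O] ↥MT :=
        LinearMap.codRestrict MT ((φ.symm.toLinearMap ∘ₗ ι) ∘ₗ T.subtype)
          (fun t => Submodule.mem_map_of_mem t.2)
      let f2 : ↥T →ₗ[O] (↥MT ⧸ Submodule.comap MT.subtype (LinearMap.range ι)) :=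
        (Submodule.mkQ _) ∘ₗ f0
      have hf2s : Function.Surjective f2 := by
        intro q
        obtain ⟨m, rfl⟩ := Submodule.mkQ_surjective _ q
        obtain ⟨x, hx⟩ := m
        obtain ⟨t, ht, rfl⟩ := hx
        exact ⟨⟨t, ht⟩, rfl⟩
      have hker : LinearMap.ker f1 = LinearMap.ker f2 := by
        ext t
        have h1 : f1 t = 0 ↔ (t : N) ∈ Ideal.span {π} • (⊤ : Submodule O N) := by
          rw [Subtype.ext_iff]
          exact Submodule.Quotient.mk_eq_zero _
        have h2 : f2 t = 0 ↔ φ.symm (ι (t : N)) ∈ LinearMap.range ι := by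
          show Submodule.Quotient.mk (f0 t) = 0 ↔ _
          rw [Submodule.Quotient.mk_eq_zero]
          rfl
        rw [LinearMap.mem_ker, LinearMap.mem_ker, h1, h2, hkey]
      exact ⟨((f1.quotKerEquivOfSurjective hf1s).symm.trans
        (Submodule.quotEquivOfEq _ _ hker)).trans (f2.quotKerEquivOfSurjective hf2s)⟩
  -- transport of quotients along submodule equality
  have quotCongr : ∀ (M₁ M₂ : Submodule O (K ⊗[O] N)) (_ : M₁ = M₂),
      Nonempty ((↥M₁ ⧸ Submodule.comap M₁.subtype (LinearMap.range ι))
        ≃ₗ[O] (↥M₂ ⧸ Submodule.comap M₂.subtype (LinearMap.range ι))) := by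
    rintro M₁ M₂ rfl
    exact ⟨LinearEquiv.refl _ _⟩
  -- M_T = M for M in the source
  have hMT_eq : ∀ M : Submodule O (K ⊗[O] N), LinearMap.range ι ≤ M →
      Nonempty ((↥M ⧸ Submodule.comap M.subtype (LinearMap.range ι))
        ≃ₗ[O] (Fin r → O ⧸ Ideal.span {π})) →
      Submodule.map (φ.symm.toLinearMap ∘ₗ ι)
        (Submodule.comap ι (Ideal.span {π} • M)) = M := by
    intro M hle hq
    have h1 : Ideal.span {π} • M ≤ LinearMap.range ι := hsmul_le M hle hq
    have h2 : Submodule.map ι (Submodule.comap ι (Ideal.span {π} • M))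
        = Ideal.span {π} • M := by
      rw [Submodule.map_comap_eq, inf_eq_right.mpr h1]
    have h3 : φ.symm.toLinearMap ∘ₗ φ.toLinearMap = LinearMap.id := by
      ext v; simp
    rw [Submodule.map_comp, h2, smul_eq_map, ← Submodule.map_comp, h3, Submodule.map_id]
  have hWmap : ∀ W : Submodule O (N ⧸ (Ideal.span {π} • (⊤ : Submodule O N))),
      Submodule.map (Submodule.mkQ (Ideal.span {π} • (⊤ : Submodule O N)))
        (Submodule.comap (Submodule.mkQ (Ideal.span {π} • (⊤ : Submodule O N))) W) = W := by
    intro W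
    rw [Submodule.map_comap_eq, Submodule.range_mkQ, top_inf_eq]
  have hT_le : ∀ M : Submodule O (K ⊗[O] N), LinearMap.range ι ≤ M →
      Ideal.span {π} • (⊤ : Submodule O N) ≤ Submodule.comap ι (Ideal.span {π} • M) := by
    intro M hle x hx
    obtain ⟨y, rfl⟩ := (mem_piN x).mp hx
    show ι (π • y) ∈ Ideal.span {π} • M
    rw [map_smul]
    exact Submodule.smul_mem_smul (Ideal.mem_span_singleton_self π) (hle ⟨y, rfl⟩)
  -- assemble
  refine Set.InvOn.bijOn (f' := fun W => Submodule.map (φ.symm.toLinearMap ∘ₗ ι)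
      (Submodule.comap (Submodule.mkQ (Ideal.span {π} • (⊤ : Submodule O N))) W))
    ⟨?_, ?_⟩ ?_ ?_
  · -- left inverse : g (f M) = M on source
    rintro M ⟨hle, hq⟩
    show Submodule.map (φ.symm.toLinearMap ∘ₗ ι) _ = M
    rw [Submodule.comap_map_eq, Submodule.ker_mkQ,
      sup_eq_left.mpr (hT_le M hle), hMT_eq M hle hq]
  · -- right inverse : f (g W) = W on target
    rintro W ⟨e⟩
    show Submodule.map (Submodule.mkQ _) (Submodule.comap ι (Ideal.span {π} •
      Submodule.map (φ.symm.toLinearMap ∘ₗ ι) _)) = W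
    set S := Submodule.comap (Submodule.mkQ (Ideal.span {π} • (⊤ : Submodule O N))) W with hS
    have h1 : Ideal.span {π} • Submodule.map (φ.symm.toLinearMap ∘ₗ ι) S
        = Submodule.map ι S := by
      rw [smul_eq_map, ← Submodule.map_comp]
      congr 1
      ext v; simp
    rw [h1, Submodule.comap_map_eq, LinearMap.ker_eq_bot.mpr hinj, sup_bot_eq, hWmap]
  · -- MapsTo f
    rintro M ⟨hle, hq⟩
    have hT := hT_le M hle
    obtain ⟨h1, h2⟩ := hengine _ hT
    obtain ⟨e0⟩ := h2
    obtain ⟨e1⟩ := quotCongr _ _ (hMT_eq M hle hq)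
    obtain ⟨e2⟩ := hq
    exact ⟨(e0.trans e1).trans e2⟩
  · -- MapsTo g
    rintro W ⟨e⟩
    have hS : Ideal.span {π} • (⊤ : Submodule O N) ≤
        Submodule.comap (Submodule.mkQ (Ideal.span {π} • (⊤ : Submodule O N))) W := by
      intro x hx
      show Submodule.mkQ _ x ∈ W
      have : Submodule.mkQ (Ideal.span {π} • (⊤ : Submodule O N)) x = 0 := by
        rw [Submodule.mkQ_apply, Submodule.Quotient.mk_eq_zero]
        exact hx
      rw [this]; exact W.zero_mem
    obtain ⟨h1, ⟨e0⟩⟩ := hengine _ hS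
    refine ⟨h1, ?_⟩
    have e1 : ↥(Submodule.map (Submodule.mkQ (Ideal.span {π} • (⊤ : Submodule O N)))
        (Submodule.comap (Submodule.mkQ (Ideal.span {π} • (⊤ : Submodule O N))) W))
        ≃ₗ[O] ↥W := LinearEquiv.ofEq _ _ (hWmap W)
    exact ⟨(e0.symm.trans e1).trans e⟩
end
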